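/- There is no finite family S₁,…,S_m of finite systems of linear inequalities in two real variables, each inequality being of the form a·u + b·v ≤ c or a·u + b·v < c with rational a, b, c, such that the union of the solution sets of S₁,…,S_m equals the two-element set {(1/√2, 1 − 1/√2), (1 − 1/√2, 1/√2)} ⊆ ℝ². -/

import Mathlib

/-- The solution set of a finite system of (strict and non-strict) linear
inequalities in two real variables with rational coefficients.  An inequality is
encoded as `(a, b, c, strict)` and means `a·u + b·v < c` if `strict = true` and
`a·u + b·v ≤ c` otherwise. -/
def solSet (S : List (ℚ × ℚ × ℚ × Bool)) : Set (ℝ × ℝ) :=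
  {p | ∀ q ∈ S,
    if q.2.2.2 then (q.1 : ℝ) * p.1 + (q.2.1 : ℝ) * p.2 < (q.2.2.1 : ℝ)
    else (q.1 : ℝ) * p.1 + (q.2.1 : ℝ) * p.2 ≤ (q.2.2.1 : ℝ)}

lemma aux_ne (a b c : ℚ) (hab : a ≠ b) :
    (a : ℝ) * (1 / Real.sqrt 2) + (b : ℝ) * (1 - 1 / Real.sqrt 2) ≠ (c : ℝ) := by
  intro h
  have hs : Real.sqrt 2 ≠ 0 := by positivity
  have h2 : ((a : ℝ) - b) = ((c : ℝ) - b) * Real.sqrt 2 := by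
    have := congrArg (· * Real.sqrt 2) h
    field_simp at this ⊢
    nlinarith [this, Real.sq_sqrt (by norm_num : (2:ℝ) ≥ 0)]
  have hcb : (c : ℝ) - b ≠ 0 := by
    intro h0
    apply hab
    have : ((a : ℝ) - b) = 0 := by rw [h2, h0]; ring
    exact_mod_cast sub_eq_zero.mp (by exact_mod_cast this)
  apply irrational_sqrt_two
  refine ⟨(a - b) / (c - b), ?_⟩
  have hcb' : (c : ℚ) - b ≠ 0 := by exact_mod_cast hcb
  push_cast
  field_simp
  linarith [h2]

lemma key_one (a b c : ℚ) (st : Bool)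
    (h : if st then (a : ℝ) * (1 / Real.sqrt 2) + (b : ℝ) * (1 - 1 / Real.sqrt 2) < c
      else (a : ℝ) * (1 / Real.sqrt 2) + (b : ℝ) * (1 - 1 / Real.sqrt 2) ≤ c) :
    ∃ ε > 0, ∀ t : ℝ, |t| < ε →
      (if st then (a : ℝ) * (1 / Real.sqrt 2 + t) + (b : ℝ) * (1 - 1 / Real.sqrt 2 - t) < c
       else (a : ℝ) * (1 / Real.sqrt 2 + t) + (b : ℝ) * (1 - 1 / Real.sqrt 2 - t) ≤ c) := by
  set L : ℝ := (a : ℝ) * (1 / Real.sqrt 2) + (b : ℝ) * (1 - 1 / Real.sqrt 2) with hL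
  have hform : ∀ t : ℝ,
      (a : ℝ) * (1 / Real.sqrt 2 + t) + (b : ℝ) * (1 - 1 / Real.sqrt 2 - t)
        = L + t * ((a : ℝ) - b) := by intro t; rw [hL]; ring
  by_cases hab : a = b
  · refine ⟨1, one_pos, fun t _ => ?_⟩
    have hab' : (a : ℝ) = b := by exact_mod_cast hab
    have : (a : ℝ) * (1 / Real.sqrt 2 + t) + (b : ℝ) * (1 - 1 / Real.sqrt 2 - t) = L := by
      rw [hform, hab']; ring
    rw [this] at *
    cases st <;> simpa using h
  · have hlt : L < c := by
      have hne : L ≠ (c : ℝ) := aux_ne a b c hab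
      cases st with
      | true => simpa using h
      | false => exact lt_of_le_of_ne (by simpa using h) hne
    have habs : |(a : ℝ) - b| > 0 := abs_pos.mpr (sub_ne_zero.mpr (by exact_mod_cast hab))
    refine ⟨((c : ℝ) - L) / |(a : ℝ) - b|, div_pos (by linarith) habs, fun t ht => ?_⟩
    have hbound : L + t * ((a : ℝ) - b) < c := by
      have h1 : t * ((a : ℝ) - b) ≤ |t| * |(a : ℝ) - b| := by
        calc t * ((a : ℝ) - b) ≤ |t * ((a : ℝ) - b)| := le_abs_self _
        _ = |t| * |(a : ℝ) - b| := abs_mul _ _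
      have h2 : |t| * |(a : ℝ) - b| < ((c : ℝ) - L) := by
        calc |t| * |(a : ℝ) - b| < (((c : ℝ) - L) / |(a : ℝ) - b|) * |(a : ℝ) - b| := by
              exact mul_lt_mul_of_pos_right ht habs
        _ = (c : ℝ) - L := div_mul_cancel₀ _ (ne_of_gt habs)
      linarith
    rw [hform]
    cases st with
    | true => simpa using hbound
    | false => simpa using le_of_lt hbound

lemma key_list (S : List (ℚ × ℚ × ℚ × Bool))
    (h : (1 / Real.sqrt 2, 1 - 1 / Real.sqrt 2) ∈ solSet S) :
    ∃ ε > 0, ∀ t : ℝ, |t| < ε →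
      (1 / Real.sqrt 2 + t, 1 - 1 / Real.sqrt 2 - t) ∈ solSet S := by
  induction S with
  | nil => exact ⟨1, one_pos, fun t _ => by simp [solSet]⟩
  | cons q S ih =>
    have hq := h q List.mem_cons_self
    have hS : (1 / Real.sqrt 2, 1 - 1 / Real.sqrt 2) ∈ solSet S :=
      fun r hr => h r (List.mem_cons_of_mem _ hr)
    obtain ⟨ε₁, hε₁, h1⟩ := key_one q.1 q.2.1 q.2.2.1 q.2.2.2 hq
    obtain ⟨ε₂, hε₂, h2⟩ := ih hS
    refine ⟨min ε₁ ε₂, lt_min hε₁ hε₂, fun t ht r hr => ?_⟩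
    rcases List.mem_cons.mp hr with rfl | hr
    · exact h1 t (lt_of_lt_of_le ht (min_le_left _ _))
    · exact h2 t (lt_of_lt_of_le ht (min_le_right _ _)) r hr

/-- **No finite union of rational linear systems carves out the two irrational points.**
There is no finite family `S₁, …, S_m` of finite systems of linear inequalities in
two real variables with rational data whose union of solution sets equals
`{(1/√2, 1 − 1/√2), (1 − 1/√2, 1/√2)}`. -/
theorem no_rational_systems_for_sqrt_two :
    ¬ ∃ systems : List (List (ℚ × ℚ × ℚ × Bool)),
      {p : ℝ × ℝ | ∃ S ∈ systems, p ∈ solSet S} =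
        ({(1 / Real.sqrt 2, 1 - 1 / Real.sqrt 2),
          (1 - 1 / Real.sqrt 2, 1 / Real.sqrt 2)} : Set (ℝ × ℝ)) := by
  rintro ⟨systems, hEq⟩
  have hp : ((1 / Real.sqrt 2, 1 - 1 / Real.sqrt 2) : ℝ × ℝ) ∈
      {p : ℝ × ℝ | ∃ S ∈ systems, p ∈ solSet S} := by
    rw [hEq]; left; rfl
  obtain ⟨S, hS, hpS⟩ := hp
  obtain ⟨ε, hε, hmem⟩ := key_list S hpS
  set t : ℝ := ε / 2 with ht
  have htpos : 0 < t := by positivity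
  have htabs : |t| < ε := by
    rw [abs_of_pos htpos]; linarith
  have hq : ((1 / Real.sqrt 2 + t, 1 - 1 / Real.sqrt 2 - t) : ℝ × ℝ) ∈
      ({(1 / Real.sqrt 2, 1 - 1 / Real.sqrt 2),
        (1 - 1 / Real.sqrt 2, 1 / Real.sqrt 2)} : Set (ℝ × ℝ)) := by
    rw [← hEq]; exact ⟨S, hS, hmem t htabs⟩
  have hs2 : (1 : ℝ) < Real.sqrt 2 := by
    nlinarith [Real.sq_sqrt (by norm_num : (0:ℝ) ≤ 2), Real.sqrt_nonneg 2]
  rcases hq with h1 | h2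
  · have := congrArg Prod.fst h1
    simp only at this
    linarith
  · have h2' := congrArg Prod.fst h2
    simp only at h2'
    have hs0 : (0 : ℝ) < Real.sqrt 2 := by linarith
    have hlt2 : Real.sqrt 2 < 2 := by
      nlinarith [Real.sq_sqrt (by norm_num : (0:ℝ) ≤ 2)]
    have hmul : 1 + t * Real.sqrt 2 = Real.sqrt 2 - 1 := by
      field_simp at h2'; linarith
    nlinarith [mul_pos htpos hs0]
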